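/- Let p : ℕ → ℝ be a positive sequence with p(n) → ∞ and p(n)/n^{1/6} → 0. Let r(n) be the proportion of words w ∈ W_n for which ρ∞(w, wst) ≥ p(n)/√n, i.e., r(n) = #{w ∈ W_n : ρ∞(w, wst) ≥ p(n)/√n} / (2n choose n). Then limsup_{n→∞} r(n)·e^{p(n)²}/2 ≤ 1; in particular r(n) is asymptotically at most 2·e^{−p(n)²}. -/

import Mathlib

/-- The number of occurrences of the letter `b` (A = `true`, B = `false`) among the first
`j` letters of the word `w`. -/
def countLetter (m : ℕ) (w : Fin m → Bool) (b : Bool) (j : ℕ) : ℕ :=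
  (Finset.univ.filter fun i : Fin m => (i : ℕ) < j ∧ w i = b).card


open Finset

lemma countLetter_zero (m : ℕ) (w : Fin m → Bool) (b : Bool) : countLetter m w b 0 = 0 := by
  simp [countLetter]

lemma countLetter_succ (m : ℕ) (w : Fin m → Bool) (b : Bool) (j : ℕ) (hj : j < m) :
    countLetter m w b (j+1) = countLetter m w b j + (if w ⟨j, hj⟩ = b then 1 else 0) := by
  unfold countLetter
  have hsplit : (univ.filter fun i : Fin m => (i : ℕ) < j + 1 ∧ w i = b)
      = (univ.filter fun i : Fin m => (i : ℕ) < j ∧ w i = b)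
        ∪ (univ.filter fun i : Fin m => (i : ℕ) = j ∧ w i = b) := by
    rw [← Finset.filter_or]
    apply Finset.filter_congr
    intro i _
    constructor
    · rintro ⟨h1, h2⟩
      rcases Nat.lt_succ_iff_lt_or_eq.mp h1 with h | h
      · exact Or.inl ⟨h, h2⟩
      · exact Or.inr ⟨h, h2⟩
    · rintro (⟨h1, h2⟩ | ⟨h1, h2⟩)
      · exact ⟨Nat.lt_succ_of_lt h1, h2⟩
      · exact ⟨by omega, h2⟩
  rw [hsplit, Finset.card_union_of_disjoint]
  · congr 1
    by_cases hb : w ⟨j, hj⟩ = b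
    · rw [if_pos hb]
      have : (univ.filter fun i : Fin m => (i : ℕ) = j ∧ w i = b) = {⟨j, hj⟩} := by
        ext i
        simp only [mem_filter, mem_univ, true_and, mem_singleton]
        constructor
        · rintro ⟨h1, _⟩; exact Fin.ext h1
        · rintro rfl; exact ⟨rfl, hb⟩
      rw [this, card_singleton]
    · rw [if_neg hb]
      have : (univ.filter fun i : Fin m => (i : ℕ) = j ∧ w i = b) = ∅ := by
        ext i
        simp only [mem_filter, mem_univ, true_and, Finset.notMem_empty, iff_false, not_and]
        rintro rfl
        rintro h
        exact hb (by convert h using 2)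
      rw [this, card_empty]
  · rw [Finset.disjoint_left]
    intro i hi hi'
    simp only [mem_filter] at hi hi'
    omega

lemma countLetter_congr (m : ℕ) (w v : Fin m → Bool) (b : Bool) (l : ℕ)
    (h : ∀ i : Fin m, (i : ℕ) < l → w i = v i) :
    countLetter m w b l = countLetter m v b l := by
  unfold countLetter
  congr 1
  apply Finset.filter_congr
  intro i _
  constructor
  · rintro ⟨h1, h2⟩; exact ⟨h1, (h i h1) ▸ h2⟩
  · rintro ⟨h1, h2⟩; exact ⟨h1, (h i h1).symm ▸ h2⟩

lemma countLetter_mono (m : ℕ) (w : Fin m → Bool) (b : Bool) {j l : ℕ} (h : j ≤ l) :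
    countLetter m w b j ≤ countLetter m w b l := by
  apply Finset.card_le_card
  intro i hi
  simp only [Finset.mem_filter] at hi ⊢
  exact ⟨hi.1, lt_of_lt_of_le hi.2.1 h, hi.2.2⟩

lemma countLetter_succ_le (m : ℕ) (w : Fin m → Bool) (b : Bool) (j : ℕ) :
    countLetter m w b (j+1) ≤ countLetter m w b j + 1 := by
  by_cases hj : j < m
  · rw [countLetter_succ m w b j hj]
    split <;> omega
  · have : countLetter m w b (j+1) = countLetter m w b j := by
      unfold countLetter
      congr 1
      apply Finset.filter_congr
      intro i _
      have : (i : ℕ) < m := i.2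
      constructor
      · rintro ⟨h1, h2⟩; exact ⟨by omega, h2⟩
      · rintro ⟨h1, h2⟩; exact ⟨by omega, h2⟩
    omega

lemma countLetter_le (m : ℕ) (w : Fin m → Bool) (b : Bool) (j : ℕ) :
    countLetter m w b j ≤ j := by
  induction j with
  | zero => simp [countLetter_zero]
  | succ j ih => have := countLetter_succ_le m w b j; omega

lemma countLetter_le_total (m : ℕ) (w : Fin m → Bool) (b : Bool) (j : ℕ) :
    countLetter m w b j ≤ (Finset.univ.filter fun i : Fin m => w i = b).card := by
  apply Finset.card_le_card
  intro i hi
  simp only [Finset.mem_filter] at hi ⊢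
  exact ⟨hi.1, hi.2.2⟩

lemma countLetter_full (m : ℕ) (w : Fin m → Bool) (b : Bool) {j : ℕ} (h : m ≤ j) :
    countLetter m w b j = (Finset.univ.filter fun i : Fin m => w i = b).card := by
  unfold countLetter
  congr 1
  apply Finset.filter_congr
  intro i _
  have : (i : ℕ) < m := i.2
  constructor
  · rintro ⟨_, h2⟩; exact h2
  · intro h2; exact ⟨by omega, h2⟩

lemma card_filter_lt (m j : ℕ) (h : j ≤ m) :
    (Finset.univ.filter fun i : Fin m => (i : ℕ) < j).card = j := by
  induction j with
  | zero => simp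
  | succ j ih =>
    have hj : j < m := by omega
    have hsplit : (univ.filter fun i : Fin m => (i : ℕ) < j + 1)
        = insert (⟨j, hj⟩ : Fin m) (univ.filter fun i : Fin m => (i : ℕ) < j) := by
      ext i
      simp only [mem_filter, mem_univ, true_and, Finset.mem_insert]
      constructor
      · intro h1
        rcases Nat.lt_succ_iff_lt_or_eq.mp h1 with h1 | h1
        · exact Or.inr h1
        · exact Or.inl (Fin.ext h1)
      · rintro (rfl | h1)
        · exact Nat.lt_succ_self j
        · omega
    rw [hsplit, Finset.card_insert_of_notMem (by simp), ih (by omega)]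

/-- the count of A's in the standard word -/
lemma countLetter_wst_aux (m j : ℕ) (h : j ≤ m) (w : Fin m → Bool)
    (hw : ∀ i : Fin m, w i = decide ((i : ℕ) % 2 = 0)) :
    countLetter m w true j = (j + 1) / 2 := by
  induction j with
  | zero => simp [countLetter_zero]
  | succ j ih =>
    have hj : j < m := by omega
    rw [countLetter_succ m w true j hj, ih (by omega)]
    rw [hw ⟨j, hj⟩]
    by_cases hpar : j % 2 = 0
    · simp only [hpar, decide_eq_true_eq]
      rw [if_pos (by simp [hpar])]
      omega
    · rw [if_neg (by simp [hpar])]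
      omega

/-- `w` is a word in `W_n`: a word of length `2n` in the letters A (`true`) and B (`false`)
containing exactly `n` A's (and hence exactly `n` B's). -/
def IsWord (n : ℕ) (w : Fin (2 * n) → Bool) : Prop :=
  (Finset.univ.filter fun i : Fin (2 * n) => w i = true).card = n


/-- The lattice-path height `2·w_A[j] − j`. -/
def walk (n : ℕ) (w : Fin (2 * n) → Bool) (j : ℕ) : ℤ :=
  2 * (countLetter (2 * n) w true j : ℤ) - j

lemma walk_zero (n : ℕ) (w : Fin (2 * n) → Bool) : walk n w 0 = 0 := by
  simp [walk, countLetter_zero]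

lemma walk_succ_le (n : ℕ) (w : Fin (2 * n) → Bool) (j : ℕ) :
    walk n w (j + 1) ≤ walk n w j + 1 := by
  have := countLetter_succ_le (2 * n) w true j
  unfold walk
  push_cast
  omega

lemma walk_succ_ge (n : ℕ) (w : Fin (2 * n) → Bool) (j : ℕ) :
    walk n w j - 1 ≤ walk n w (j + 1) := by
  have := countLetter_mono (2 * n) w true (by omega : j ≤ j + 1)
  unfold walk
  push_cast
  omega

/-- Discrete intermediate value theorem (upward). -/
lemma exists_walk_eq_of_le {f : ℕ → ℤ} (hstep : ∀ i, f (i + 1) ≤ f i + 1) {t : ℤ}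
    (h0 : f 0 ≤ t) {j : ℕ} (hj : t ≤ f j) : ∃ i ≤ j, f i = t := by
  induction j with
  | zero => exact ⟨0, le_refl 0, le_antisymm h0 hj⟩
  | succ j ih =>
    by_cases h : t ≤ f j
    · obtain ⟨i, hi, hfi⟩ := ih h
      exact ⟨i, by omega, hfi⟩
    · have := hstep j
      exact ⟨j + 1, le_refl _, by omega⟩

lemma abs_walk_le (n : ℕ) (w : Fin (2 * n) → Bool) (hw : IsWord n w) {j : ℕ} (hj : j ≤ 2 * n) :
    |walk n w j| ≤ n := by
  have h1 := countLetter_le (2 * n) w true j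
  have h2 := countLetter_le_total (2 * n) w true j
  rw [hw] at h2
  -- n ≤ c + (2n − j): total trues split
  have h3 : n ≤ countLetter (2 * n) w true j + (2 * n - j) := by
    have hsub : (Finset.univ.filter fun i : Fin (2 * n) => w i = true)
        ⊆ (Finset.univ.filter fun i : Fin (2 * n) => (i : ℕ) < j ∧ w i = true)
          ∪ (Finset.univ.filter fun i : Fin (2 * n) => ¬ (i : ℕ) < j) := by
      intro i hi
      simp only [Finset.mem_filter, Finset.mem_univ, true_and, Finset.mem_union] at hi ⊢
      by_cases h : (i : ℕ) < j
      · exact Or.inl ⟨h, hi⟩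
      · exact Or.inr h
    have hcard := Finset.card_le_card hsub
    have hcard2 : (Finset.univ.filter fun i : Fin (2 * n) => ¬ (i : ℕ) < j).card = 2 * n - j := by
      have := card_filter_lt (2 * n) j hj
      have hsplit := Finset.card_filter_add_card_filter_not
        (s := (Finset.univ : Finset (Fin (2 * n)))) (p := fun i : Fin (2 * n) => (i : ℕ) < j)
      simp only [Finset.card_univ, Fintype.card_fin] at hsplit
      omega
    have hle := Finset.card_union_le
      (Finset.univ.filter fun i : Fin (2 * n) => (i : ℕ) < j ∧ w i = true)
      (Finset.univ.filter fun i : Fin (2 * n) => ¬ (i : ℕ) < j)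
    rw [hw] at hcard
    unfold countLetter
    omega
  unfold walk
  rw [abs_le]
  constructor <;> push_cast <;> omega

/-- Reflection of a word after position `j`: flip all letters at indices `≥ j`. -/
def reflect (m j : ℕ) (w : Fin m → Bool) : Fin m → Bool :=
  fun i => if (i : ℕ) < j then w i else !(w i)

lemma reflect_prefix (m j : ℕ) (w : Fin m → Bool) (b : Bool) {l : ℕ} (hl : l ≤ j) :
    countLetter m (reflect m j w) b l = countLetter m w b l := by
  apply countLetter_congr
  intro i hi
  simp [reflect, if_pos (lt_of_lt_of_le hi hl)]

/-- Number of `true`s in the reflected word. -/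
lemma trues_reflect (m j : ℕ) (w : Fin m → Bool) (hj : j ≤ m) :
    (Finset.univ.filter fun i : Fin m => reflect m j w i = true).card
      + (Finset.univ.filter fun i : Fin m => w i = true).card
      + j = 2 * countLetter m w true j + m := by
  classical
  set a := countLetter m w true j with ha
  -- the trues of the reflection
  have hset : (Finset.univ.filter fun i : Fin m => reflect m j w i = true)
      = (Finset.univ.filter fun i : Fin m => (i : ℕ) < j ∧ w i = true)
        ∪ (Finset.univ.filter fun i : Fin m => ¬ (i : ℕ) < j ∧ ¬ (w i = true)) := by
    ext i
    simp only [Finset.mem_filter, Finset.mem_univ, true_and, Finset.mem_union, reflect]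
    by_cases h : (i : ℕ) < j
    · simp [h]
    · simp [h]
  have hdisj : Disjoint (Finset.univ.filter fun i : Fin m => (i : ℕ) < j ∧ w i = true)
      (Finset.univ.filter fun i : Fin m => ¬ (i : ℕ) < j ∧ ¬ (w i = true)) := by
    rw [Finset.disjoint_left]
    intro i hi hi'
    simp only [Finset.mem_filter] at hi hi'
    exact hi'.2.1 hi.2.1
  have hcard : (Finset.univ.filter fun i : Fin m => reflect m j w i = true).card
      = a + (Finset.univ.filter fun i : Fin m => ¬ (i : ℕ) < j ∧ ¬ (w i = true)).card := by
    rw [hset, Finset.card_union_of_disjoint hdisj]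
    rfl
  -- split the trues of w by position
  have h1 : (Finset.univ.filter fun i : Fin m => (i : ℕ) < j ∧ w i = true).card
      + (Finset.univ.filter fun i : Fin m => ¬ (i : ℕ) < j ∧ w i = true).card
      = (Finset.univ.filter fun i : Fin m => w i = true).card := by
    rw [← Finset.card_union_of_disjoint]
    · congr 1
      ext i
      simp only [Finset.mem_filter, Finset.mem_univ, true_and, Finset.mem_union]
      by_cases h : (i : ℕ) < j <;> simp [h]
    · rw [Finset.disjoint_left]
      intro i hi hi'
      simp only [Finset.mem_filter] at hi hi'
      exact hi'.2.1 hi.2.1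
  -- split the non-prefix positions by letter
  have h2 : (Finset.univ.filter fun i : Fin m => ¬ (i : ℕ) < j ∧ w i = true).card
      + (Finset.univ.filter fun i : Fin m => ¬ (i : ℕ) < j ∧ ¬ (w i = true)).card
      = m - j := by
    rw [← Finset.card_union_of_disjoint]
    · have : (Finset.univ.filter fun i : Fin m => ¬ (i : ℕ) < j ∧ w i = true)
          ∪ (Finset.univ.filter fun i : Fin m => ¬ (i : ℕ) < j ∧ ¬ (w i = true))
          = (Finset.univ.filter fun i : Fin m => ¬ (i : ℕ) < j) := by
        ext i
        simp only [Finset.mem_filter, Finset.mem_univ, true_and, Finset.mem_union]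
        by_cases h : w i = true <;> simp [h]
      rw [this]
      have := card_filter_lt m j hj
      have hsplit := Finset.card_filter_add_card_filter_not
        (s := (Finset.univ : Finset (Fin m))) (p := fun i : Fin m => (i : ℕ) < j)
      simp only [Finset.card_univ, Fintype.card_fin] at hsplit
      omega
    · rw [Finset.disjoint_left]
      intro i hi hi'
      simp only [Finset.mem_filter] at hi hi'
      exact hi'.2.2 hi.2.2
  have haj : a ≤ j := countLetter_le m w true j
  unfold countLetter at *
  omega

/-- The number of words in `Fin M → Bool` with exactly `c` trues is `M.choose c`. -/
lemma card_filter_true_eq_choose (M c : ℕ) :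
    (Finset.univ.filter fun w : Fin M → Bool =>
      (Finset.univ.filter fun i : Fin M => w i = true).card = c).card = M.choose c := by
  classical
  rw [show M.choose c = (Finset.powersetCard c (Finset.univ : Finset (Fin M))).card from by
    simp [Finset.card_powersetCard]]
  apply Finset.card_bij (fun w _ => Finset.univ.filter fun i : Fin M => w i = true)
  · intro w hw
    simp only [Finset.mem_filter] at hw
    simp [Finset.mem_powersetCard, hw.2]
  · intro w hw w' hw' h
    funext i
    have : (i ∈ Finset.univ.filter fun i : Fin M => w i = true)
        ↔ (i ∈ Finset.univ.filter fun i : Fin M => w' i = true) := by rw [h]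
    simp only [Finset.mem_filter, Finset.mem_univ, true_and] at this
    cases hwi : w i <;> cases hwi' : w' i <;> simp_all
  · intro s hs
    simp only [Finset.mem_powersetCard] at hs
    refine ⟨fun i => if i ∈ s then true else false, ?_, ?_⟩
    · simp only [Finset.mem_filter, Finset.mem_univ, true_and]
      rw [← hs.2]
      congr 1
      ext i
      simp only [Finset.mem_filter, Finset.mem_univ, true_and]
      split <;> simp_all
    · ext i
      simp only [Finset.mem_filter, Finset.mem_univ, true_and]
      split <;> simp_all

open Classical in
/-- First hitting time of level `t` by the walk of `w` (within `[0, 2n]`). -/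
noncomputable def hitTime (n : ℕ) (t : ℤ) (w : Fin (2 * n) → Bool) : ℕ :=
  if h : ∃ j, j ≤ 2 * n ∧ walk n w j = t then Nat.find h else 0

lemma hitTime_spec (n : ℕ) (t : ℤ) (w : Fin (2 * n) → Bool)
    (h : ∃ j, j ≤ 2 * n ∧ walk n w j = t) :
    hitTime n t w ≤ 2 * n ∧ walk n w (hitTime n t w) = t ∧
      ∀ i < hitTime n t w, walk n w i ≠ t := by
  classical
  rw [hitTime, dif_pos h]
  obtain ⟨h1, h2⟩ := Nat.find_spec h
  refine ⟨h1, h2, fun i hi hit => ?_⟩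
  exact Nat.find_min h hi ⟨by omega, hit⟩

open Classical in
/-- Reflection bound: the number of words in `W_n` whose walk hits level `t ≠ 0`
is at most the number of words with `n + t` trues. -/
lemma card_hit_le (n : ℕ) (t : ℤ) (c : ℕ) (hc : (c : ℤ) = n + t) :
    (Finset.univ.filter fun w : Fin (2 * n) → Bool =>
      IsWord n w ∧ ∃ j, j ≤ 2 * n ∧ walk n w j = t).card ≤ (2 * n).choose c := by
  classical
  rw [← card_filter_true_eq_choose (2 * n) c]
  apply Finset.card_le_card_of_injOn (fun w => reflect (2 * n) (hitTime n t w) w)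
  · -- maps into words with c trues
    intro w hw
    simp only [Finset.coe_filter, Set.mem_setOf_eq, Finset.mem_filter, Finset.mem_univ, true_and] at hw ⊢
    obtain ⟨hword, hhit⟩ := hw
    obtain ⟨hj1, hj2, _⟩ := hitTime_spec n t w hhit
    have htr := trues_reflect (2 * n) (hitTime n t w) w hj1
    rw [hword] at htr
    have hwalk : 2 * (countLetter (2 * n) w true (hitTime n t w) : ℤ) = t + hitTime n t w := by
      have := hj2; unfold walk at this; omega
    omega
  · -- injectivity
    intro w hw w' hw' heq
    simp only [Finset.coe_filter, Set.mem_setOf_eq, Finset.mem_univ, true_and] at hw hw'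
    have key : ∀ v v' : Fin (2 * n) → Bool,
        (∃ j, j ≤ 2 * n ∧ walk n v j = t) → (∃ j, j ≤ 2 * n ∧ walk n v' j = t) →
        reflect (2 * n) (hitTime n t v) v = reflect (2 * n) (hitTime n t v') v' →
        hitTime n t v ≤ hitTime n t v' → hitTime n t v' ≤ hitTime n t v := by
      intro v v' hv hv' heq hle
      obtain ⟨hj1, hj2, _⟩ := hitTime_spec n t v hv
      have hpre : ∀ i : Fin (2 * n), (i : ℕ) < hitTime n t v → v i = v' i := by
        intro i hi
        have h1 : reflect (2 * n) (hitTime n t v) v i = v i := by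
          simp [reflect, if_pos hi]
        have h2 : reflect (2 * n) (hitTime n t v') v' i = v' i := by
          simp [reflect, if_pos (lt_of_lt_of_le hi hle)]
        rw [← h1, heq, h2]
      have hcl : countLetter (2 * n) v' true (hitTime n t v)
          = countLetter (2 * n) v true (hitTime n t v) :=
        (countLetter_congr _ v v' true _ hpre).symm
      have hwalk' : walk n v' (hitTime n t v) = t := by
        unfold walk; rw [hcl]; exact hj2
      classical
      rw [hitTime, dif_pos hv']
      exact Nat.find_min' hv' ⟨hj1, hwalk'⟩
    have hjj : hitTime n t w = hitTime n t w' := by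
      rcases le_total (hitTime n t w) (hitTime n t w') with h | h
      · exact le_antisymm h (key w w' hw.2 hw'.2 heq h)
      · exact le_antisymm (key w' w hw'.2 hw.2 heq.symm h) h
    funext i
    have := congrFun heq i
    simp only [reflect, hjj] at this
    by_cases hi : (i : ℕ) < hitTime n t w'
    · rwa [if_pos hi, if_pos hi] at this
    · rw [if_neg hi, if_neg hi] at this
      exact Bool.not_inj this

lemma choose_prod (n : ℕ) : ∀ m, m ≤ n →
    (2 * n).choose (n - m) * ∏ i ∈ Finset.Icc 1 m, (n + i)
      = (2 * n).choose n * ∏ i ∈ Finset.Icc 1 m, (n + 1 - i) := by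
  intro m
  induction m with
  | zero => simp
  | succ m ih =>
    intro h
    rw [Finset.prod_Icc_succ_top (by omega : 1 ≤ m + 1),
      Finset.prod_Icc_succ_top (by omega : 1 ≤ m + 1)]
    have hstep := Nat.choose_succ_right_eq (2 * n) (n - (m + 1))
    have h1 : n - (m + 1) + 1 = n - m := by omega
    have h2 : 2 * n - (n - (m + 1)) = n + (m + 1) := by omega
    rw [h1, h2] at hstep
    have ihm := ih (by omega)
    have h3 : n + 1 - (m + 1) = n - m := by omega
    rw [h3]
    calc (2 * n).choose (n - (m + 1)) * ((∏ i ∈ Finset.Icc 1 m, (n + i)) * (n + (m + 1)))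
        = ((2 * n).choose (n - (m + 1)) * (n + (m + 1))) * ∏ i ∈ Finset.Icc 1 m, (n + i) := by
          ring
      _ = ((2 * n).choose (n - m) * (n - m)) * ∏ i ∈ Finset.Icc 1 m, (n + i) := by
          rw [← hstep]
      _ = ((2 * n).choose (n - m) * ∏ i ∈ Finset.Icc 1 m, (n + i)) * (n - m) := by ring
      _ = ((2 * n).choose n * ∏ i ∈ Finset.Icc 1 m, (n + 1 - i)) * (n - m) := by rw [ihm]
      _ = (2 * n).choose n * ((∏ i ∈ Finset.Icc 1 m, (n + 1 - i)) * (n - m)) := by ring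

lemma sum_odd (m : ℕ) : ∑ i ∈ Finset.Icc 1 m, (2 * i - 1) = m ^ 2 := by
  induction m with
  | zero => simp
  | succ m ih =>
    rw [Finset.sum_Icc_succ_top (by omega : 1 ≤ m + 1), ih]
    ring_nf
    omega

lemma choose_ratio_le (n m : ℕ) (hm : m ≤ n) :
    ((2 * n).choose (n - m) : ℝ) ≤ ((2 * n).choose n : ℝ)
      * Real.exp (-(m : ℝ) ^ 2 / ((n : ℝ) + m)) := by
  have hid := choose_prod n m hm
  set P : ℝ := ∏ i ∈ Finset.Icc 1 m, ((n : ℝ) + i) with hP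
  set Q : ℝ := ∏ i ∈ Finset.Icc 1 m, (((n + 1 - i : ℕ) : ℝ)) with hQ
  have hidR : ((2 * n).choose (n - m) : ℝ) * P = ((2 * n).choose n : ℝ) * Q := by
    have := congrArg (fun x : ℕ => (x : ℝ)) hid
    push_cast at this
    convert this using 2
  have hPpos : 0 < P := by
    apply Finset.prod_pos
    intro i hi
    simp only [Finset.mem_Icc] at hi
    have h1 : (1 : ℝ) ≤ (i : ℝ) := by exact_mod_cast hi.1
    have h2 : (0 : ℝ) ≤ (n : ℝ) := Nat.cast_nonneg n
    linarith
  have hkey : ∀ i ∈ Finset.Icc 1 m, ((n + 1 - i : ℕ) : ℝ)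
      ≤ ((n : ℝ) + i) * Real.exp (-(2 * (i : ℝ) - 1) / ((n : ℝ) + m)) := by
    intro i hi
    simp only [Finset.mem_Icc] at hi
    have hcast : ((n + 1 - i : ℕ) : ℝ) = (n : ℝ) + 1 - i := by
      have : i ≤ n + 1 := by omega
      push_cast [Nat.cast_sub this]
      ring
    rw [hcast]
    set t : ℝ := (2 * (i : ℝ) - 1) / ((n : ℝ) + m) with ht
    have hnm : (0 : ℝ) < (n : ℝ) + m := by
      have : (1 : ℝ) ≤ (i : ℝ) := by exact_mod_cast hi.1
      have him : (i : ℝ) ≤ m := by exact_mod_cast hi.2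
      nlinarith [Nat.cast_nonneg (α := ℝ) n]
    have htmul : t * ((n : ℝ) + m) = 2 * (i : ℝ) - 1 := by
      rw [ht]; field_simp
    have hexp : 1 - t ≤ Real.exp (-t) := by
      have := Real.add_one_le_exp (-t)
      linarith
    have hi1 : (1 : ℝ) ≤ (i : ℝ) := by exact_mod_cast hi.1
    have him : (i : ℝ) ≤ (m : ℝ) := by exact_mod_cast hi.2
    have hmn : (m : ℝ) ≤ (n : ℝ) := by exact_mod_cast hm
    have ht0 : 0 ≤ t := by
      rw [ht]
      apply div_nonneg (by linarith) (by linarith)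
    have hfac : ((n : ℝ) + i) * t ≤ 2 * (i : ℝ) - 1 := by
      rw [← htmul]
      nlinarith [mul_nonneg ht0 (by linarith : (0:ℝ) ≤ (m : ℝ) - i)]
    have hneg : -(2 * (i : ℝ) - 1) / ((n : ℝ) + (m : ℝ)) = -t := by
      rw [ht]; ring
    rw [hneg]
    nlinarith [mul_le_mul_of_nonneg_left hexp (by linarith : (0:ℝ) ≤ (n : ℝ) + i)]
  have hQle : Q ≤ P * Real.exp (-(m : ℝ) ^ 2 / ((n : ℝ) + m)) := by
    calc Q ≤ ∏ i ∈ Finset.Icc 1 m, (((n : ℝ) + i)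
        * Real.exp (-(2 * (i : ℝ) - 1) / ((n : ℝ) + m))) := by
          apply Finset.prod_le_prod
          · intro i _; positivity
          · exact hkey
      _ = P * ∏ i ∈ Finset.Icc 1 m, Real.exp (-(2 * (i : ℝ) - 1) / ((n : ℝ) + m)) := by
          rw [hP, ← Finset.prod_mul_distrib]
      _ = P * Real.exp (∑ i ∈ Finset.Icc 1 m, (-(2 * (i : ℝ) - 1) / ((n : ℝ) + m))) := by
          rw [Real.exp_sum]
      _ = P * Real.exp (-(m : ℝ) ^ 2 / ((n : ℝ) + m)) := by
          congr 1
          rw [← Finset.sum_div]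
          congr 1
          have : ∑ i ∈ Finset.Icc 1 m, (-(2 * (i : ℝ) - 1)) =
              -∑ i ∈ Finset.Icc 1 m, (2 * (i : ℝ) - 1) := by
            rw [← Finset.sum_neg_distrib]
          rw [this]
          congr 1
          have hcast : ∑ i ∈ Finset.Icc 1 m, (2 * (i : ℝ) - 1)
              = ((∑ i ∈ Finset.Icc 1 m, (2 * i - 1) : ℕ) : ℝ) := by
            rw [Nat.cast_sum]
            apply Finset.sum_congr rfl
            intro i hi
            simp only [Finset.mem_Icc] at hi
            have : 1 ≤ 2 * i := by omega
            push_cast [Nat.cast_sub this]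
            ring
          rw [hcast, sum_odd]
          push_cast
          ring
  have hA : (0 : ℝ) ≤ ((2 * n).choose n : ℝ) := Nat.cast_nonneg _
  have hmul := mul_le_mul_of_nonneg_left hQle hA
  rw [show ((2 * n).choose (n - m) : ℝ) = ((2 * n).choose n : ℝ) * Q / P from by
    field_simp; linarith [hidR]]
  rw [div_le_iff₀ hPpos]
  nlinarith [hmul]

/-- `ρ∞(w, v) = (2/n)·max_{1 ≤ j ≤ 2n} |w_A[j] − v_A[j]|`. -/
noncomputable def rhoInf (n : ℕ) (w v : Fin (2 * n) → Bool) : ℝ :=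
  (2 / (n : ℝ)) * ((Finset.Icc 1 (2 * n)).sup fun j =>
    ((countLetter (2 * n) w true j : ℤ) - (countLetter (2 * n) v true j : ℤ)).natAbs : ℕ)

/-- The standard word `wst = ABAB…AB ∈ W_n`. -/
def wst (n : ℕ) : Fin (2 * n) → Bool := fun i => decide ((i : ℕ) % 2 = 0)

/-- The proportion `r(n)` of words `w ∈ W_n` with `ρ∞(w, wst) ≥ p(n)/√n`. -/
noncomputable def propFar (p : ℕ → ℝ) (n : ℕ) : ℝ :=
  (Nat.card {w : Fin (2 * n) → Bool // IsWord n w ∧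
      p n / Real.sqrt n ≤ rhoInf n w (wst n)} : ℝ) / (Nat.choose (2 * n) n : ℝ)


/-- A word far from the standard word has a walk hitting level `±(2k−1)`. -/
lemma far_hits (n : ℕ) (hn : 1 ≤ n) (x : ℝ) (hx : 0 < x) (w : Fin (2 * n) → Bool)
    (hw : IsWord n w) (hfar : x / Real.sqrt n ≤ rhoInf n w (wst n)) :
    ∃ j, j ≤ 2 * n ∧ (walk n w j = (2 * (⌈x * Real.sqrt n / 2⌉₊ : ℤ) - 1) ∨
      walk n w j = -(2 * (⌈x * Real.sqrt n / 2⌉₊ : ℤ) - 1)) := by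
  set s : ℝ := Real.sqrt n with hsdef
  have hnR : (0 : ℝ) < n := by exact_mod_cast hn
  have hs : 0 < s := Real.sqrt_pos.mpr hnR
  have hs2 : s ^ 2 = n := Real.sq_sqrt (le_of_lt hnR)
  set T : ℕ := ((Finset.Icc 1 (2 * n)).sup fun j =>
    ((countLetter (2 * n) w true j : ℤ) - (countLetter (2 * n) (wst n) true j : ℤ)).natAbs)
    with hT
  have hfar' : x / s ≤ 2 / (n : ℝ) * T := hfar
  set k : ℕ := ⌈x * s / 2⌉₊ with hkdef
  have hk0 : 0 < k := Nat.ceil_pos.mpr (by positivity)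
  have hkT : k ≤ T := by
    rw [hkdef]
    apply Nat.ceil_le.mpr
    have h1 : x ≤ 2 / (n : ℝ) * T * s := by
      rw [div_le_iff₀ hs] at hfar'
      exact hfar'
    have h2 : x * n ≤ 2 * T * s := by
      calc x * n ≤ (2 / (n : ℝ) * T * s) * n := by
            apply mul_le_mul_of_nonneg_right h1 (le_of_lt hnR)
        _ = 2 * T * s := by field_simp
    nlinarith
  obtain ⟨j, hjmem, hjk⟩ := (Finset.le_sup_iff (by simpa [bot_eq_zero] using hk0 : (⊥ : ℕ) < k)).mp hkT
  rw [Finset.mem_Icc] at hjmem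
  have hwstc : countLetter (2 * n) (wst n) true j = (j + 1) / 2 :=
    countLetter_wst_aux (2 * n) j hjmem.2 (wst n) (fun i => rfl)
  rw [hwstc] at hjk
  set c : ℕ := countLetter (2 * n) w true j with hc
  set d : ℤ := (c : ℤ) - ((j + 1) / 2 : ℕ) with hd
  have hwalkd : walk n w j = 2 * d + (j % 2 : ℕ) := by
    have hdiv : 2 * ((j + 1) / 2) = j + j % 2 := by omega
    unfold walk
    rw [hd]
    push_cast
    have : ((2 : ℤ) * ((j + 1) / 2 : ℕ)) = (j : ℤ) + (j % 2 : ℕ) := by exact_mod_cast hdiv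
    push_cast at this
    linarith
  have hcase : (k : ℤ) ≤ d ∨ d ≤ -(k : ℤ) := by
    have : k ≤ d.natAbs := hjk
    omega
  have hm1 : (1 : ℤ) ≤ 2 * (k : ℤ) - 1 := by omega
  rcases hcase with hpos | hneg
  · -- walk n w j ≥ 2k − 1, hits 2k−1
    have hup : (2 * (k : ℤ) - 1) ≤ walk n w j := by
      rw [hwalkd]
      have : (0 : ℤ) ≤ (j % 2 : ℕ) := by positivity
      omega
    obtain ⟨i, hij, hi⟩ := exists_walk_eq_of_le (walk_succ_le n w)
      (by rw [walk_zero]; omega) hup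
    exact ⟨i, le_trans hij hjmem.2, Or.inl hi⟩
  · -- walk n w j ≤ −(2k − 1), hits −(2k−1)
    have hdown : (2 * (k : ℤ) - 1) ≤ -walk n w j := by
      rw [hwalkd]
      have : (j % 2 : ℕ) ≤ (1 : ℤ) := by exact_mod_cast Nat.le_of_lt_succ (Nat.mod_lt j (by omega))
      omega
    have hstepg : ∀ i, -walk n w (i + 1) ≤ -walk n w i + 1 := fun i => by
      have := walk_succ_ge n w i; omega
    have h0g : -walk n w 0 ≤ 2 * (k : ℤ) - 1 := by rw [walk_zero]; omega
    obtain ⟨i, hij, hi⟩ := exists_walk_eq_of_le (f := fun i => -walk n w i) hstepg h0g hdown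
    exact ⟨i, le_trans hij hjmem.2, Or.inr (by omega)⟩

open Classical in
lemma propFar_bound (p : ℕ → ℝ) (n : ℕ) (hn : 1 ≤ n) (hx : 0 < p n) :
    propFar p n = 0 ∨
      (2 * ⌈p n * Real.sqrt n / 2⌉₊ - 1 ≤ n ∧
        propFar p n ≤ 2 * Real.exp (-((2 * ⌈p n * Real.sqrt n / 2⌉₊ - 1 : ℕ) : ℝ) ^ 2
          / ((n : ℝ) + ((2 * ⌈p n * Real.sqrt n / 2⌉₊ - 1 : ℕ) : ℝ)))) := by
  set k : ℕ := ⌈p n * Real.sqrt n / 2⌉₊ with hkdef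
  have hnR : (0 : ℝ) < n := by exact_mod_cast hn
  have hk0 : 0 < k := Nat.ceil_pos.mpr (by positivity)
  set m : ℕ := 2 * k - 1 with hmdef
  set P : (Fin (2 * n) → Bool) → Prop :=
    fun w => IsWord n w ∧ p n / Real.sqrt n ≤ rhoInf n w (wst n) with hPdef
  have hNat : (Nat.card {w : Fin (2 * n) → Bool // P w} : ℕ)
      = (Finset.univ.filter P).card := by
    rw [Nat.card_eq_fintype_card, Fintype.card_subtype]
  by_cases hzero : (Finset.univ.filter P).card = 0
  · left
    unfold propFar
    rw [show (Nat.card {w : Fin (2 * n) → Bool // IsWord n w ∧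
        p n / Real.sqrt n ≤ rhoInf n w (wst n)}) = (0 : ℕ) from hNat.trans hzero]
    simp
  · right
    obtain ⟨w₀, hw₀⟩ := Finset.card_pos.mp (Nat.pos_of_ne_zero hzero)
    rw [Finset.mem_filter] at hw₀
    obtain ⟨j₀, hj₀, hhit₀⟩ := far_hits n hn (p n) hx w₀ hw₀.2.1 hw₀.2.2
    have hmZ : ((m : ℕ) : ℤ) = 2 * (k : ℤ) - 1 := by
      rw [hmdef]; push_cast [Nat.cast_sub (by omega : 1 ≤ 2 * k)]; ring
    have hmn : m ≤ n := by
      have habs := abs_walk_le n w₀ hw₀.2.1 hj₀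
      rcases hhit₀ with h | h <;> rw [h] at habs <;>
        (rw [abs_le] at habs; omega)
    refine ⟨hmn, ?_⟩
    -- the far set is contained in the union of the two hit sets
    have hsub : (Finset.univ.filter P) ⊆
        (Finset.univ.filter fun w : Fin (2 * n) → Bool =>
          IsWord n w ∧ ∃ j, j ≤ 2 * n ∧ walk n w j = ((m : ℕ) : ℤ))
        ∪ (Finset.univ.filter fun w : Fin (2 * n) → Bool =>
          IsWord n w ∧ ∃ j, j ≤ 2 * n ∧ walk n w j = -((m : ℕ) : ℤ)) := by
      intro w hw
      rw [Finset.mem_filter] at hw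
      obtain ⟨j, hj, hhit⟩ := far_hits n hn (p n) hx w hw.2.1 hw.2.2
      rw [Finset.mem_union, Finset.mem_filter, Finset.mem_filter]
      rcases hhit with h | h
      · exact Or.inl ⟨Finset.mem_univ w, hw.2.1, j, hj, by rw [h, hmZ]⟩
      · exact Or.inr ⟨Finset.mem_univ w, hw.2.1, j, hj, by rw [h, hmZ]⟩
    have hcard1 := card_hit_le n ((m : ℕ) : ℤ) (n + m) (by push_cast; ring)
    have hcard2 := card_hit_le n (-((m : ℕ) : ℤ)) (n - m)
      (by push_cast [Nat.cast_sub hmn]; ring)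
    have hsymm : (2 * n).choose (n + m) = (2 * n).choose (n - m) := by
      have h1 : n + m ≤ 2 * n := by omega
      have := Nat.choose_symm h1
      rw [show 2 * n - (n + m) = n - m by omega] at this
      exact this.symm
    have hcount : (Finset.univ.filter P).card ≤ 2 * (2 * n).choose (n - m) := by
      calc (Finset.univ.filter P).card
          ≤ _ := Finset.card_le_card hsub
        _ ≤ _ + _ := Finset.card_union_le _ _
        _ ≤ (2 * n).choose (n + m) + (2 * n).choose (n - m) := by
            exact Nat.add_le_add hcard1 hcard2
        _ = 2 * (2 * n).choose (n - m) := by rw [hsymm]; ring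
    have hC : 0 < (2 * n).choose n := Nat.choose_pos (by omega)
    have hCR : (0 : ℝ) < ((2 * n).choose n : ℝ) := by exact_mod_cast hC
    have hratio := choose_ratio_le n m hmn
    unfold propFar
    rw [div_le_iff₀ hCR]
    calc (Nat.card {w : Fin (2 * n) → Bool // IsWord n w ∧
          p n / Real.sqrt n ≤ rhoInf n w (wst n)} : ℝ)
        = ((Finset.univ.filter P).card : ℝ) := by exact_mod_cast hNat
      _ ≤ 2 * ((2 * n).choose (n - m) : ℝ) := by exact_mod_cast hcount
      _ ≤ 2 * (((2 * n).choose n : ℝ)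
            * Real.exp (-(m : ℝ) ^ 2 / ((n : ℝ) + m))) := by linarith
      _ = 2 * Real.exp (-(m : ℝ) ^ 2 / ((n : ℝ) + m)) * ((2 * n).choose n : ℝ) := by ring

set_option maxHeartbeats 1000000 in
/-- If `p` is a positive sequence with `p(n) → ∞` and `p(n) = o(n^{1/6})`, then the
proportion `r(n)` of words `w ∈ W_n` with `ρ∞(w, wst) ≥ p(n)/√n` satisfies
`limsup_{n→∞} r(n)·e^{p(n)²}/2 ≤ 1`, i.e. `r(n)` is asymptotically at most `2·e^{−p(n)²}`. -/
theorem proportion_far_from_standard_asymptotics (p : ℕ → ℝ) (hpos : ∀ n, 0 < p n)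
    (htop : Filter.Tendsto p Filter.atTop Filter.atTop)
    (hsmall : Filter.Tendsto (fun n : ℕ => p n / (n : ℝ) ^ ((1 : ℝ) / 6))
      Filter.atTop (nhds 0)) :
    Filter.limsup (fun n : ℕ => propFar p n * Real.exp ((p n) ^ 2) / 2) Filter.atTop ≤ 1 := by
  set q : ℕ → ℝ := fun n => p n / (n : ℝ) ^ ((1 : ℝ) / 6) with hqdef
  set g : ℕ → ℝ := fun n => Real.exp (q n ^ 3 + q n ^ 2 + 2 * q n) with hgdef
  have hgt : Filter.Tendsto g Filter.atTop (nhds 1) := by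
    have hcont : Continuous (fun t : ℝ => Real.exp (t ^ 3 + t ^ 2 + 2 * t)) := by continuity
    have := (hcont.tendsto 0).comp hsmall
    simp at this; exact this
  have hev : ∀ᶠ n in Filter.atTop, propFar p n * Real.exp ((p n) ^ 2) / 2 ≤ g n := by
    filter_upwards [htop.eventually_ge_atTop 1, Filter.eventually_ge_atTop 1] with n hp1 hn1
    rcases propFar_bound p n hn1 (hpos n) with h0 | ⟨hmn, hle⟩
    · rw [h0]
      simp only [hgdef, zero_mul, zero_div]
      positivity
    · set x : ℝ := p n with hxdef
      set s : ℝ := Real.sqrt n with hsdef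
      set k : ℕ := ⌈x * s / 2⌉₊ with hkdef
      set m : ℕ := 2 * k - 1 with hmdef
      have hnR : (0 : ℝ) < n := by exact_mod_cast hn1
      have hn1R : (1 : ℝ) ≤ n := by exact_mod_cast hn1
      have hs0 : 0 < s := Real.sqrt_pos.mpr hnR
      have hs2 : s ^ 2 = n := Real.sq_sqrt (le_of_lt hnR)
      have hs1 : (1 : ℝ) ≤ s := by nlinarith
      have hk0 : 0 < k := Nat.ceil_pos.mpr (by positivity)
      have hmR : (m : ℝ) = 2 * (k : ℝ) - 1 := by
        rw [hmdef]
        push_cast [Nat.cast_sub (by omega : 1 ≤ 2 * k)]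
        ring
      have hkub : (k : ℝ) < x * s / 2 + 1 := Nat.ceil_lt_add_one (by positivity)
      have hklb : x * s / 2 ≤ (k : ℝ) := Nat.le_ceil _
      have hm_lb : x * s - 1 ≤ (m : ℝ) := by rw [hmR]; linarith
      have hm_ub : (m : ℝ) ≤ x * s + 1 := by rw [hmR]; linarith
      have hm0 : (0 : ℝ) ≤ x * s - 1 := by nlinarith
      -- exponent bound
      set u : ℝ := (n : ℝ) ^ ((1 : ℝ) / 6) with hudef
      have hu0 : 0 < u := Real.rpow_pos_of_pos hnR _
      have hu3 : u ^ 3 = s := by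
        rw [hudef, hsdef, ← Real.rpow_natCast ((n : ℝ) ^ ((1 : ℝ) / 6)) 3,
          ← Real.rpow_mul (le_of_lt hnR), Real.sqrt_eq_rpow]
        norm_num
      have hu2 : u ^ 2 ≤ (n : ℝ) := by
        rw [hudef, ← Real.rpow_natCast ((n : ℝ) ^ ((1 : ℝ) / 6)) 2,
          ← Real.rpow_mul (le_of_lt hnR)]
        calc (n : ℝ) ^ ((1 : ℝ) / 6 * 2) ≤ (n : ℝ) ^ (1 : ℝ) :=
              Real.rpow_le_rpow_of_exponent_le hn1R (by norm_num)
          _ = n := Real.rpow_one _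
      have hus : u ≤ s := by
        rw [hudef, hsdef, Real.sqrt_eq_rpow]
        exact Real.rpow_le_rpow_of_exponent_le hn1R (by norm_num)
      have hqn : q n = x / u := rfl
      have hx1 : (1 : ℝ) ≤ x := hp1
      have hexpo : x ^ 2 - (m : ℝ) ^ 2 / ((n : ℝ) + m) ≤ q n ^ 3 + q n ^ 2 + 2 * q n := by
        have hden1 : (0 : ℝ) < (n : ℝ) + m := by positivity
        have hden2 : (0 : ℝ) < (n : ℝ) + x * s + 1 := by positivity
        have step1 : (x * s - 1) ^ 2 / ((n : ℝ) + x * s + 1) ≤ (m : ℝ) ^ 2 / ((n : ℝ) + m) := by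
          apply div_le_div₀ (by positivity) _ hden1 (by linarith)
          exact pow_le_pow_left₀ hm0 hm_lb 2
        have step2 : x ^ 2 - (x * s - 1) ^ 2 / ((n : ℝ) + x * s + 1)
            ≤ (x ^ 3 * s + x ^ 2 + 2 * x * s) / n := by
          have hkey : x ^ 2 * ((n : ℝ) + x * s + 1) - (x * s - 1) ^ 2
              = x ^ 3 * s + x ^ 2 + 2 * x * s - 1 := by nlinarith [hs2]
          have heq : x ^ 2 - (x * s - 1) ^ 2 / ((n : ℝ) + x * s + 1)
              = (x ^ 3 * s + x ^ 2 + 2 * x * s - 1) / ((n : ℝ) + x * s + 1) := by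
            rw [← hkey]
            field_simp
          rw [heq]
          have hnn : (0 : ℝ) ≤ x ^ 3 * s + x ^ 2 + 2 * x * s := by positivity
          have hnum : x ^ 3 * s + x ^ 2 + 2 * x * s - 1 ≤ x ^ 3 * s + x ^ 2 + 2 * x * s := by
            linarith
          have hd : (n : ℝ) ≤ (n : ℝ) + x * s + 1 := by nlinarith
          exact div_le_div₀ hnn hnum hnR hd
        have step3 : (x ^ 3 * s + x ^ 2 + 2 * x * s) / n ≤ q n ^ 3 + q n ^ 2 + 2 * q n := by
          rw [hqn, div_pow, div_pow]
          have e1 : x ^ 3 * s / n = x ^ 3 / u ^ 3 := by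
            rw [hu3, ← hs2]
            field_simp
          have e2 : x ^ 2 / n ≤ x ^ 2 / u ^ 2 := by
            apply div_le_div₀ (by positivity) (le_refl _) (by positivity) hu2
          have e3 : 2 * x * s / n ≤ 2 * (x / u) := by
            have : 2 * x * s / n = 2 * x / s := by
              rw [← hs2]
              field_simp
            rw [this]
            rw [mul_div_assoc]
            apply mul_le_mul_of_nonneg_left _ (by norm_num : (0:ℝ) ≤ 2)
            apply div_le_div₀ (by positivity) (le_refl _) hu0 hus
          have hsplit : (x ^ 3 * s + x ^ 2 + 2 * x * s) / n
              = x ^ 3 * s / n + x ^ 2 / n + 2 * x * s / n := by ring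
          rw [hsplit, e1]
          linarith
        linarith
      calc propFar p n * Real.exp (x ^ 2) / 2
          ≤ 2 * Real.exp (-(m : ℝ) ^ 2 / ((n : ℝ) + m)) * Real.exp (x ^ 2) / 2 := by
            have hmul := mul_le_mul_of_nonneg_right hle (le_of_lt (Real.exp_pos (x ^ 2)))
            linarith
        _ = Real.exp (-(m : ℝ) ^ 2 / ((n : ℝ) + m)) * Real.exp (x ^ 2) := by ring
        _ = Real.exp (x ^ 2 - (m : ℝ) ^ 2 / ((n : ℝ) + m)) := by
            rw [← Real.exp_add]
            congr 1
            ring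
        _ ≤ g n := by
            rw [hgdef]
            exact Real.exp_le_exp.mpr hexpo
  have hnonneg : ∀ n : ℕ, 0 ≤ propFar p n * Real.exp ((p n) ^ 2) / 2 := by
    intro n
    have h1 : 0 ≤ propFar p n := by
      unfold propFar
      positivity
    positivity
  have hbdd : Filter.IsBoundedUnder (· ≤ ·) Filter.atTop g := hgt.isBoundedUnder_le
  have hcob : Filter.IsCoboundedUnder (· ≤ ·) Filter.atTop
      (fun n : ℕ => propFar p n * Real.exp ((p n) ^ 2) / 2) :=
    Filter.isCoboundedUnder_le_of_le Filter.atTop hnonneg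
  calc Filter.limsup (fun n : ℕ => propFar p n * Real.exp ((p n) ^ 2) / 2) Filter.atTop
      ≤ Filter.limsup g Filter.atTop := Filter.limsup_le_limsup hev hcob hbdd
    _ = 1 := hgt.limsup_eq
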